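/- Let Λ be a row-finite finitely aligned k-graph such that Λ⁰ is finite and Λ contains no cycles, i.e. no λ ∈ Λ ∖ Λ⁰ with r(λ) = s(λ). Let Λ⁰_src := {v ∈ Λ⁰ : vΛ = {v}}. Let {t_λ : λ ∈ Λ} be a Cuntz–Krieger Λ-family in a C*-algebra B with t_v ≠ 0 for every v ∈ Λ⁰_src. Then each set Λv (v ∈ Λ⁰_src) is finite, and there is a *-isomorphism from the finite-dimensional C*-algebra ⊕_{v ∈ Λ⁰_src} M_{Λv}(ℂ) (full matrix algebras with entries indexed by Λv × Λv) onto the C*-subalgebra of B generated by {t_λ : λ ∈ Λ}, taking each matrix unit θ_{α,β} (α, β ∈ Λv, v ∈ Λ⁰_src) to t_α t_β*. -/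

import Mathlib

open scoped ComplexOrder ENat

/-- A higher-rank graph (`k`-graph): a countable small category `Λ` together with a degree
functor `d : Λ → ℕᵏ` satisfying the unique factorisation property.  Morphisms ("paths") form
the type `Path`; vertices are identified with the paths of degree `0`.  Composition is encoded
as a total function `comp` whose axioms only apply to composable pairs (`s μ = r ν`). -/
structure KGraph (k : ℕ) : Type 1 where
  Path : Type
  countable : Countable Path
  d : Path → Fin k → ℕ
  r : Path → Path
  s : Path → Path
  comp : Path → Path → Path
  d_r : ∀ lam, d (r lam) = 0
  d_s : ∀ lam, d (s lam) = 0
  r_vertex : ∀ v, d v = 0 → r v = v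
  s_vertex : ∀ v, d v = 0 → s v = v
  r_comp : ∀ mu nu, s mu = r nu → r (comp mu nu) = r mu
  s_comp : ∀ mu nu, s mu = r nu → s (comp mu nu) = s nu
  d_comp : ∀ mu nu, s mu = r nu → d (comp mu nu) = d mu + d nu
  comp_assoc : ∀ lam mu nu, s lam = r mu → s mu = r nu →
    comp (comp lam mu) nu = comp lam (comp mu nu)
  id_comp : ∀ lam, comp (r lam) lam = lam
  comp_id : ∀ lam, comp lam (s lam) = lam
  factor : ∀ (lam : Path) (m n : Fin k → ℕ), d lam = m + n →
    ∃! p : Path × Path, d p.1 = m ∧ d p.2 = n ∧ s p.1 = r p.2 ∧ comp p.1 p.2 = lam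

namespace KGraph

variable {k : ℕ} (Λ : KGraph k)

/-- `v` is a vertex, i.e. a path of degree `0`. -/
def IsVertex (v : Λ.Path) : Prop := Λ.d v = 0

/-- The set of minimal common extensions of `mu` and `nu`. -/
def MCE (mu nu : Λ.Path) : Set Λ.Path :=
  {lam | Λ.d lam = Λ.d mu ⊔ Λ.d nu ∧
    (∃ α, Λ.s mu = Λ.r α ∧ Λ.comp mu α = lam) ∧
    (∃ β, Λ.s nu = Λ.r β ∧ Λ.comp nu β = lam)}

/-- Pairs `(α, β)` with `μα = νβ ∈ MCE (μ, ν)`. -/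
def MCEPairs (mu nu : Λ.Path) : Set (Λ.Path × Λ.Path) :=
  {p | Λ.s mu = Λ.r p.1 ∧ Λ.s nu = Λ.r p.2 ∧
    Λ.comp mu p.1 = Λ.comp nu p.2 ∧ Λ.comp mu p.1 ∈ Λ.MCE mu nu}

/-- `Λ` is finitely aligned if all sets of minimal common extensions are finite. -/
def FinitelyAligned : Prop := ∀ mu nu : Λ.Path, (Λ.MCE mu nu).Finite

/-- `Λ` is row-finite if `vΛⁿ` is finite for every vertex `v` and `n ∈ ℕᵏ`. -/
def RowFinite : Prop :=
  ∀ (v : Λ.Path) (n : Fin k → ℕ), Λ.IsVertex v → {lam | Λ.r lam = v ∧ Λ.d lam = n}.Finite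

/-- `Λ` is locally convex. -/
def LocallyConvex : Prop :=
  ∀ i j : Fin k, i ≠ j → ∀ mu : Λ.Path, Λ.d mu = Pi.single i 1 →
    (∃ e, Λ.r e = Λ.r mu ∧ Λ.d e = Pi.single j 1) →
    ∃ e, Λ.r e = Λ.s mu ∧ Λ.d e = Pi.single j 1

/-- A subset `F ⊆ vΛ` is exhaustive if every `λ ∈ vΛ` has a common extension with some
member of `F`. -/
def Exhaustive (v : Λ.Path) (F : Set Λ.Path) : Prop :=
  ∀ lam, Λ.r lam = v → ∃ mu ∈ F, (Λ.MCE lam mu).Nonempty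

/-- A generalised cycle: a pair of distinct paths `μ ≠ ν` with the same range and source such
that every extension of `μ` has a common extension with `ν`. -/
def IsGenCycle (mu nu : Λ.Path) : Prop :=
  mu ≠ nu ∧ Λ.s mu = Λ.s nu ∧ Λ.r mu = Λ.r nu ∧
    ∀ τ, Λ.r τ = Λ.s mu → (Λ.MCE (Λ.comp mu τ) nu).Nonempty

/-- An entrance to the generalised cycle `(μ, ν)`. -/
def IsEntrance (mu nu τ : Λ.Path) : Prop :=
  Λ.r τ = Λ.s nu ∧ Λ.MCE (Λ.comp nu τ) mu = ∅

/-- A (conventional) cycle: a path of nonzero degree whose range and source coincide. -/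
def IsCycle (lam : Λ.Path) : Prop := Λ.d lam ≠ 0 ∧ Λ.r lam = Λ.s lam

/-- `Λ` contains no (conventional) cycles. -/
def NoCycles : Prop := ∀ lam : Λ.Path, Λ.r lam = Λ.s lam → Λ.d lam = 0

/-- A vertex `v` with `vΛ = {v}`. -/
def IsSource (v : Λ.Path) : Prop :=
  Λ.IsVertex v ∧ ∀ lam, Λ.r lam = v → lam = v

/-- `Ext (μ; E)`. -/
def Ext (mu : Λ.Path) (E : Set Λ.Path) : Set Λ.Path :=
  {τ | Λ.r τ = Λ.s mu ∧ ∃ nu ∈ E, Λ.comp mu τ ∈ Λ.MCE mu nu}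

/-- No cycle in `Λ` has an entrance. -/
def NoCycleHasEntrance : Prop :=
  ∀ lam, Λ.IsCycle lam → ∀ τ, Λ.r τ = Λ.r lam → (Λ.MCE τ lam).Nonempty

/-- `x` encodes a path of degree `m ∈ (ℕ ∪ {∞})ᵏ` in `Λ`, i.e. a degree-preserving functor
`Ω_{k,m} → Λ`, recorded as a total function on pairs `(p, q)`; only the values with
`p ≤ q ≤ m` are constrained. -/
def IsPathFun (m : Fin k → ℕ∞) (x : (Fin k → ℕ) → (Fin k → ℕ) → Λ.Path) : Prop :=
  (∀ p q : Fin k → ℕ, p ≤ q → (∀ i, (q i : ℕ∞) ≤ m i) → Λ.d (x p q) = q - p) ∧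
  (∀ p q : Fin k → ℕ, p ≤ q → (∀ i, (q i : ℕ∞) ≤ m i) →
    Λ.r (x p q) = x p p ∧ Λ.s (x p q) = x q q) ∧
  (∀ p q u : Fin k → ℕ, p ≤ q → q ≤ u → (∀ i, (u i : ℕ∞) ≤ m i) →
    Λ.comp (x p q) (x q u) = x p u)

/-- `x` is a boundary path of degree `m`. -/
def IsBoundaryFun (m : Fin k → ℕ∞) (x : (Fin k → ℕ) → (Fin k → ℕ) → Λ.Path) : Prop :=
  Λ.IsPathFun m x ∧
  ∀ p : Fin k → ℕ, (∀ i, (p i : ℕ∞) ≤ m i) →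
    ∀ E : Set Λ.Path, E.Finite → (∀ lam ∈ E, Λ.r lam = x p p) → Λ.Exhaustive (x p p) E →
      ∃ mu ∈ E, (∀ i, ((p i + Λ.d mu i : ℕ) : ℕ∞) ≤ m i) ∧ x p (p + Λ.d mu) = mu

/-- A path function `x` of degree `m` belongs to `Λ^{≤∞}`. -/
def IsLeInftyPath (m : Fin k → ℕ∞) (x : (Fin k → ℕ) → (Fin k → ℕ) → Λ.Path) : Prop :=
  Λ.IsPathFun m x ∧
  ∀ n : Fin k → ℕ, (∀ i, (n i : ℕ∞) ≤ m i) → ∀ i, (n i : ℕ∞) = m i →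
    ∀ e, ¬(Λ.r e = x n n ∧ Λ.d e = Pi.single i 1)

/-- The degree of `τ^∞` for a cycle (or initial cycle) `τ`: `∞` in the coordinates where
`d τ` is nonzero, `0` elsewhere. -/
def degInf (τ : Λ.Path) : Fin k → ℕ∞ := fun i => if Λ.d τ i = 0 then 0 else ⊤

/-- An initial cycle: `r μ = s μ` and `r(μ)Λ^{eᵢ} = ∅` whenever `d(μ)ᵢ = 0`. -/
def IsInitialCycle (mu : Λ.Path) : Prop :=
  Λ.r mu = Λ.s mu ∧
  ∀ i, Λ.d mu i = 0 → ∀ e, ¬(Λ.r e = Λ.r mu ∧ Λ.d e = Pi.single i 1)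

/-- `x` is (the path function of) `μ^∞` for the initial cycle `μ`. -/
def IsInfIterate (mu : Λ.Path) (x : (Fin k → ℕ) → (Fin k → ℕ) → Λ.Path) : Prop :=
  Λ.IsPathFun (Λ.degInf mu) x ∧ x 0 0 = Λ.r mu ∧
    ∀ n : ℕ, x (n • Λ.d mu) ((n + 1) • Λ.d mu) = mu

/-- Membership in `Λ^{≤ n}`. -/
def LePath (n : Fin k → ℕ) (lam : Λ.Path) : Prop :=
  Λ.d lam ≤ n ∧
    ∀ i, Λ.d lam i < n i → ∀ e, ¬(Λ.r e = Λ.s lam ∧ Λ.d e = Pi.single i 1)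

/-- Minimal common extensions computed inside a subset `S` of `Λ` (all data lying in `S`). -/
def MCEWithin (S : Set Λ.Path) (mu nu : Λ.Path) : Set Λ.Path :=
  {lam | lam ∈ S ∧ Λ.d lam = Λ.d mu ⊔ Λ.d nu ∧
    (∃ α ∈ S, Λ.s mu = Λ.r α ∧ Λ.comp mu α = lam) ∧
    (∃ β ∈ S, Λ.s nu = Λ.r β ∧ Λ.comp nu β = lam)}

/-- Generalised cycles of the sub-`k`-graph determined by a subset `S` of `Λ`. -/
def IsGenCycleWithin (S : Set Λ.Path) (mu nu : Λ.Path) : Prop :=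
  mu ≠ nu ∧ Λ.s mu = Λ.s nu ∧ Λ.r mu = Λ.r nu ∧
    ∀ τ ∈ S, Λ.r τ = Λ.s mu → (Λ.MCEWithin S (Λ.comp mu τ) nu).Nonempty

end KGraph

/-- A Cuntz–Krieger `Λ`-family in a `*`-ring `B`: (CK1) the vertex elements are mutually
orthogonal projections, (CK2) multiplicativity, (CK3) the Cuntz–Krieger relation for
`t_μ* t_ν`, and (CK4) the exhaustivity relation (stated for an arbitrary ordering of the
finite exhaustive set). -/
structure CKFamily {k : ℕ} (Λ : KGraph k) (B : Type*) [NonUnitalRing B] [StarRing B] where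
  t : Λ.Path → B
  selfadjoint : ∀ v, Λ.IsVertex v → star (t v) = t v
  idem : ∀ v, Λ.IsVertex v → t v * t v = t v
  orth : ∀ v w, Λ.IsVertex v → Λ.IsVertex w → v ≠ w → t v * t w = 0
  mul_eq : ∀ mu nu, Λ.s mu = Λ.r nu → t mu * t nu = t (Λ.comp mu nu)
  ck3 : ∀ mu nu, star (t mu) * t nu = ∑ᶠ p ∈ Λ.MCEPairs mu nu, t p.1 * star (t p.2)
  ck4 : ∀ v, Λ.IsVertex v → ∀ (a : Λ.Path) (l : List Λ.Path), (a :: l).Nodup →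
    (∀ lam ∈ a :: l, Λ.r lam = v) → Λ.Exhaustive v {lam | lam ∈ a :: l} →
    (l.map fun lam => t v - t lam * star (t lam)).foldl (· * ·)
      (t v - t a * star (t a)) = 0

/-- A C*-algebra is AF (approximately finite-dimensional) if it contains an increasing
sequence of finite-dimensional `*`-subalgebras whose union is dense. -/
def IsAF (A : Type*) [NonUnitalNormedRing A] [StarRing A] [NormedSpace ℂ A] : Prop :=
  ∃ S : ℕ → NonUnitalStarSubalgebra ℂ A, Monotone S ∧
    (∀ n, FiniteDimensional ℂ (S n)) ∧ Dense (⋃ n, (S n : Set A))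

/-- A closed `*`-subalgebra of `A`, presented as a subset `S`, is AF if it contains an
increasing sequence of finite-dimensional `*`-subalgebras of `A` whose union is dense in `S`. -/
def IsAFIn (A : Type*) [NonUnitalNormedRing A] [StarRing A] [NormedSpace ℂ A]
    (S : Set A) : Prop :=
  ∃ T : ℕ → NonUnitalStarSubalgebra ℂ A, Monotone T ∧ (∀ n, (T n : Set A) ⊆ S) ∧
    (∀ n, FiniteDimensional ℂ (T n)) ∧ ∀ x ∈ S, x ∈ closure (⋃ n, (T n : Set A))
namespace KGraph
variable {k : ℕ} (Λ : KGraph k)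

lemma split (lam : Λ.Path) (m : Fin k → ℕ) (hm : m ≤ Λ.d lam) :
    ∃ p q, Λ.d p = m ∧ Λ.d q = Λ.d lam - m ∧ Λ.s p = Λ.r q ∧ Λ.comp p q = lam := by
  obtain ⟨pq, h, -⟩ := Λ.factor lam m (Λ.d lam - m)
    (funext fun i => by
      have h2 : m i ≤ Λ.d lam i := hm i
      simp only [Pi.add_apply, Pi.sub_apply]; omega)
  exact ⟨pq.1, pq.2, h.1, h.2.1, h.2.2.1, h.2.2.2⟩

lemma degree_lt (hnc : Λ.NoCycles) (hfin : {v : Λ.Path | Λ.IsVertex v}.Finite)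
    (lam : Λ.Path) (i : Fin k) : Λ.d lam i < Nat.card {v : Λ.Path | Λ.IsVertex v} + 1 := by
  haveI : Finite {v : Λ.Path | Λ.IsVertex v} := hfin.to_subtype
  set n := Λ.d lam i with hn
  by_contra hcon
  push_neg at hcon
  set m : Fin (n+1) → (Fin k → ℕ) := fun j i' => if i' = i then (j : ℕ) else 0 with hmdef
  have hmj : ∀ (j : Fin (n+1)) (i' : Fin k), m j i' = if i' = i then (j : ℕ) else 0 :=
    fun j i' => rfl
  have hm : ∀ j, m j ≤ Λ.d lam := by
    intro j i'
    rw [hmj]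
    split
    · next h => subst h; exact Nat.lt_succ_iff.mp j.2
    · exact Nat.zero_le _
  choose P Q hdP hdQ hsr hc using fun j => Λ.split lam (m j) (hm j)
  have key : ∀ j j' : Fin (n+1), j < j' → Λ.s (P j) ≠ Λ.s (P j') := by
    intro j j' hjj' heq
    have hj : (j : ℕ) < (j' : ℕ) := hjj'
    have hj' : (j' : ℕ) ≤ n := Nat.lt_succ_iff.mp j'.2
    have hle : m j' - m j ≤ Λ.d (Q j) := by
      intro i'
      have h2 : Λ.d (Q j) i' = Λ.d lam i' - m j i' := by rw [hdQ]; rfl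
      have h3 : (m j' - m j) i' = m j' i' - m j i' := rfl
      have h4 := hm j' i'
      rw [hmj] at h4
      rw [h3, h2, hmj, hmj]
      by_cases h : i' = i <;> simp [h] at h4 ⊢ <;> omega
    obtain ⟨a, b, hda, hdb, hab, hcab⟩ := Λ.split (Q j) (m j' - m j) hle
    have hra : Λ.r a = Λ.r (Q j) := by rw [← hcab, Λ.r_comp a b hab]
    have hsPa : Λ.s (P j) = Λ.r a := by rw [hra]; exact hsr j
    have huniq := Λ.factor lam (m j') (Λ.d lam - m j')
      (funext fun i' => by
        have h2 : m j' i' ≤ Λ.d lam i' := hm j' i'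
        simp only [Pi.add_apply, Pi.sub_apply]; omega)
    have h1 : Λ.d (P j') = m j' ∧ Λ.d (Q j') = Λ.d lam - m j' ∧ Λ.s (P j') = Λ.r (Q j') ∧
        Λ.comp (P j') (Q j') = lam := ⟨hdP j', hdQ j', hsr j', hc j'⟩
    have h2 : Λ.d (Λ.comp (P j) a) = m j' ∧ Λ.d b = Λ.d lam - m j' ∧
        Λ.s (Λ.comp (P j) a) = Λ.r b ∧ Λ.comp (Λ.comp (P j) a) b = lam := by
      refine ⟨?_, ?_, ?_, ?_⟩
      · rw [Λ.d_comp _ _ hsPa, hdP, hda]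
        funext i'
        have h3 : (m j + (m j' - m j)) i' = m j i' + (m j' i' - m j i') := rfl
        rw [h3, hmj, hmj]
        by_cases h : i' = i <;> simp [h] <;> omega
      · rw [hdb, hdQ]
        funext i'
        have h3 : ((Λ.d lam - m j) - (m j' - m j)) i' =
            (Λ.d lam i' - m j i') - (m j' i' - m j i') := rfl
        have h4 : (Λ.d lam - m j') i' = Λ.d lam i' - m j' i' := rfl
        have h5 := hm j i'
        have h6 := hm j' i'
        rw [hmj] at h5 h6
        rw [h3, h4, hmj, hmj]
        by_cases h : i' = i <;> simp [h] at h5 h6 ⊢ <;> omega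
      · rw [Λ.s_comp _ _ hsPa]; exact hab
      · rw [Λ.comp_assoc _ _ _ hsPa hab, hcab]; exact hc j
    have heqpair := huniq.unique (y₁ := (Λ.comp (P j) a, b)) (y₂ := (P j', Q j')) h2 h1
    have hPj' : Λ.comp (P j) a = P j' := congrArg Prod.fst heqpair
    have hsa : Λ.s a = Λ.s (P j') := by rw [← hPj', Λ.s_comp _ _ hsPa]
    have hras : Λ.r a = Λ.s a := by rw [hra, ← hsr j, heq, ← hsa]
    have hda0 := hnc a hras
    have hz2 : (m j' - m j) i = 0 := by rw [← hda, hda0]; rfl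
    have h3 : (m j' - m j) i = m j' i - m j i := rfl
    rw [h3, hmj, hmj] at hz2
    simp at hz2
    omega
  have hinj : Function.Injective (fun j : Fin (n+1) =>
      (⟨Λ.s (P j), Λ.d_s (P j)⟩ : {v : Λ.Path | Λ.IsVertex v})) := by
    intro j j' h
    have h' : Λ.s (P j) = Λ.s (P j') := congrArg Subtype.val h
    rcases lt_trichotomy j j' with h2 | h2 | h2
    · exact absurd h' (key j j' h2)
    · exact h2
    · exact absurd h'.symm (key j' j h2)
  have hcard : n + 1 ≤ Nat.card {v : Λ.Path | Λ.IsVertex v} := by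
    exact le_of_eq_of_le (by simp) (Nat.card_le_card_of_injective _ hinj)
  omega

lemma path_finite (hnc : Λ.NoCycles) (hRF : Λ.RowFinite)
    (hfin : {v : Λ.Path | Λ.IsVertex v}.Finite) : Finite Λ.Path := by
  rw [← Set.finite_univ_iff]
  set N := Nat.card {v : Λ.Path | Λ.IsVertex v}
  have hsub : (Set.univ : Set Λ.Path) ⊆ ⋃ v ∈ {v : Λ.Path | Λ.IsVertex v},
      ⋃ n ∈ Set.Icc (0 : Fin k → ℕ) (fun _ => N), {lam | Λ.r lam = v ∧ Λ.d lam = n} := by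
    intro lam _
    simp only [Set.mem_iUnion, Set.mem_setOf_eq]
    exact ⟨Λ.r lam, Λ.d_r lam, Λ.d lam,
      ⟨fun i => Nat.zero_le _, fun i => Nat.lt_succ_iff.mp (Λ.degree_lt hnc hfin lam i)⟩,
      rfl, rfl⟩
  refine Set.Finite.subset ?_ hsub
  exact hfin.biUnion fun v hv => (Set.finite_Icc _ _).biUnion fun n _ => hRF v n hv

end KGraph
namespace KGraph
variable {k : ℕ} (Λ : KGraph k)

lemma r_s (lam : Λ.Path) : Λ.r (Λ.s lam) = Λ.s lam := Λ.r_vertex _ (Λ.d_s lam)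

lemma nu_eq_of_comp_eq {mu nu : Λ.Path} (hsr : Λ.s mu = Λ.r nu) (h : Λ.comp mu nu = mu) :
    nu = Λ.s mu := by
  have hd : Λ.d mu = Λ.d mu + Λ.d nu := by rw [← Λ.d_comp mu nu hsr, h]
  have hd0 : Λ.d nu = 0 := by
    funext i
    have := congrFun hd i
    simp only [Pi.add_apply] at this
    simp only [Pi.zero_apply]
    omega
  rw [hsr]
  exact (Λ.r_vertex nu hd0).symm

lemma mem_MCE_source {beta gam lam : Λ.Path} (hβ : Λ.IsSource (Λ.s beta))
    (hγ : Λ.IsSource (Λ.s gam)) (h : lam ∈ Λ.MCE beta gam) : beta = gam ∧ lam = beta := by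
  obtain ⟨-, ⟨a, ha1, ha2⟩, ⟨b, hb1, hb2⟩⟩ := h
  have ha : a = Λ.s beta := hβ.2 a ha1.symm
  have hb : b = Λ.s gam := hγ.2 b hb1.symm
  subst ha hb
  rw [Λ.comp_id] at ha2 hb2
  exact ⟨ha2.trans hb2.symm, ha2.symm⟩

lemma self_mem_MCE_self {beta : Λ.Path} : beta ∈ Λ.MCE beta beta :=
  ⟨(sup_idem _).symm, ⟨Λ.s beta, (Λ.r_s beta).symm, Λ.comp_id beta⟩,
    ⟨Λ.s beta, (Λ.r_s beta).symm, Λ.comp_id beta⟩⟩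

lemma MCEPairs_source_ne {beta gam : Λ.Path} (hβ : Λ.IsSource (Λ.s beta))
    (hγ : Λ.IsSource (Λ.s gam)) (hne : beta ≠ gam) : Λ.MCEPairs beta gam = ∅ := by
  ext p
  simp only [MCEPairs, Set.mem_setOf_eq, Set.mem_empty_iff_false, iff_false]
  rintro ⟨-, -, -, hmem⟩
  exact hne (Λ.mem_MCE_source hβ hγ hmem).1

lemma MCEPairs_source_self {beta : Λ.Path} (hβ : Λ.IsSource (Λ.s beta)) :
    Λ.MCEPairs beta beta = {(Λ.s beta, Λ.s beta)} := by
  ext p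
  simp only [MCEPairs, Set.mem_setOf_eq, Set.mem_singleton_iff]
  constructor
  · rintro ⟨h1, h2, -, -⟩
    have ha : p.1 = Λ.s beta := hβ.2 p.1 h1.symm
    have hb : p.2 = Λ.s beta := hβ.2 p.2 h2.symm
    exact Prod.ext ha hb
  · rintro rfl
    refine ⟨(Λ.r_s beta).symm, (Λ.r_s beta).symm, rfl, ?_⟩
    rw [Λ.comp_id]
    exact Λ.self_mem_MCE_self

lemma reach [Fintype Λ.Path] [DecidableEq Λ.Path] (w : Λ.Path) (hw : Λ.IsVertex w) :
    ∃ τ, Λ.r τ = w ∧ Λ.IsSource (Λ.s τ) := by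
  set H : Λ.Path → ℕ :=
    fun v => (Finset.univ.filter fun lam => Λ.r lam = v).sup (fun lam => ∑ i, Λ.d lam i)
    with hH
  suffices h : ∀ N w, Λ.IsVertex w → H w ≤ N → ∃ τ, Λ.r τ = w ∧ Λ.IsSource (Λ.s τ) from
    h (H w) w hw le_rfl
  intro N
  induction N with
  | zero =>
    intro w hw _
    by_cases hsrc : Λ.IsSource w
    · exact ⟨w, Λ.r_vertex w hw, by rw [Λ.s_vertex w hw]; exact hsrc⟩
    · exfalso
      simp only [IsSource, hw, true_and, not_forall] at hsrc
      obtain ⟨lam, hr, hne⟩ := hsrc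
      have hd : Λ.d lam ≠ 0 := by
        intro h0
        exact hne (by rw [← Λ.r_vertex lam h0, hr])
      have hpos : 1 ≤ ∑ i, Λ.d lam i := by
        rcases Function.ne_iff.mp hd with ⟨i, hi⟩
        calc 1 ≤ Λ.d lam i := Nat.pos_of_ne_zero hi
        _ ≤ ∑ i, Λ.d lam i := Finset.single_le_sum (fun _ _ => Nat.zero_le _) (Finset.mem_univ i)
      have hle : ∑ i, Λ.d lam i ≤ H w := by
        show (∑ i, Λ.d lam i) ≤ (Finset.univ.filter fun m => Λ.r m = w).sup (fun lam => ∑ i, Λ.d lam i)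
        exact Finset.le_sup (f := fun lam => ∑ i, Λ.d lam i) (b := lam) (by simp [hr])
      rename_i hHw
      omega
  | succ N ih =>
    intro w hw hHw
    by_cases hsrc : Λ.IsSource w
    · exact ⟨w, Λ.r_vertex w hw, by rw [Λ.s_vertex w hw]; exact hsrc⟩
    · simp only [IsSource, hw, true_and, not_forall] at hsrc
      obtain ⟨lam, hr, hne⟩ := hsrc
      have hd : Λ.d lam ≠ 0 := by
        intro h0
        exact hne (by rw [← Λ.r_vertex lam h0, hr])
      have hpos : 1 ≤ ∑ i, Λ.d lam i := by
        rcases Function.ne_iff.mp hd with ⟨i, hi⟩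
        calc 1 ≤ Λ.d lam i := Nat.pos_of_ne_zero hi
        _ ≤ ∑ i, Λ.d lam i := Finset.single_le_sum (fun _ _ => Nat.zero_le _) (Finset.mem_univ i)
      have hstep : H (Λ.s lam) + (∑ i, Λ.d lam i) ≤ H w := by
        have : ∀ mu ∈ Finset.univ.filter fun m => Λ.r m = Λ.s lam,
            (∑ i, Λ.d mu i) ≤ H w - (∑ i, Λ.d lam i) := by
          intro mu hmu
          simp only [Finset.mem_filter, Finset.mem_univ, true_and] at hmu
          have hcm : Λ.s lam = Λ.r mu := hmu.symm
          have hmem : (∑ i, Λ.d (Λ.comp lam mu) i) ≤ H w := by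
            show (∑ i, Λ.d (Λ.comp lam mu) i) ≤ (Finset.univ.filter fun m => Λ.r m = w).sup (fun lam => ∑ i, Λ.d lam i)
            exact Finset.le_sup (f := fun lam => ∑ i, Λ.d lam i) (b := Λ.comp lam mu)
              (by simp [Λ.r_comp lam mu hcm, hr])
          rw [Λ.d_comp lam mu hcm] at hmem
          simp only [Pi.add_apply, Finset.sum_add_distrib] at hmem
          omega
        have h2 : H (Λ.s lam) ≤ H w - (∑ i, Λ.d lam i) := Finset.sup_le this
        have h3 : ∑ i, Λ.d lam i ≤ H w := by
          show (∑ i, Λ.d lam i) ≤ (Finset.univ.filter fun m => Λ.r m = w).sup (fun lam => ∑ i, Λ.d lam i)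
          exact Finset.le_sup (f := fun lam => ∑ i, Λ.d lam i) (b := lam) (by simp [hr])
        omega
      obtain ⟨τ, hτr, hτs⟩ := ih (Λ.s lam) (Λ.d_s lam) (by omega)
      refine ⟨Λ.comp lam τ, ?_, ?_⟩
      · rw [Λ.r_comp lam τ hτr.symm, hr]
      · rw [Λ.s_comp lam τ hτr.symm]
        exact hτs

end KGraph
namespace CKFamily
variable {k : ℕ} {Λ : KGraph k} [DecidableEq Λ.Path] {B : Type*} [NonUnitalRing B] [StarRing B] (f : CKFamily Λ B)

lemma star_mul_source {beta gam : Λ.Path} (hβ : Λ.IsSource (Λ.s beta))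
    (hγ : Λ.IsSource (Λ.s gam)) :
    star (f.t beta) * f.t gam = if beta = gam then f.t (Λ.s beta) else 0 := by
  rw [f.ck3]
  by_cases h : beta = gam
  · subst h
    rw [if_pos rfl, Λ.MCEPairs_source_self hβ, finsum_mem_singleton,
      f.selfadjoint _ (Λ.d_s beta), f.idem _ (Λ.d_s beta)]
  · rw [if_neg h, Λ.MCEPairs_source_ne hβ hγ h, finsum_mem_empty]

lemma t_mul_t_s (mu : Λ.Path) : f.t mu * f.t (Λ.s mu) = f.t mu := by
  rw [f.mul_eq mu (Λ.s mu) (Λ.r_s mu).symm, Λ.comp_id]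

lemma t_v_mul {v τ : Λ.Path} (hv : Λ.IsVertex v) (h : Λ.r τ = v) :
    f.t v * f.t τ = f.t τ := by
  rw [f.mul_eq v τ ((Λ.s_vertex v hv).trans h.symm)]
  have : Λ.comp v τ = τ := by rw [← h]; exact Λ.id_comp τ
  rw [this]

lemma theta_mul {a b c e : Λ.Path} (hab : Λ.s a = Λ.s b) (hb : Λ.IsSource (Λ.s b))
    (hc : Λ.IsSource (Λ.s c)) :
    (f.t a * star (f.t b)) * (f.t c * star (f.t e)) =
      if b = c then f.t a * star (f.t e) else 0 := by
  rw [mul_assoc, ← mul_assoc (star (f.t b)), star_mul_source f hb hc]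
  by_cases h : b = c
  · rw [if_pos h, if_pos h, ← mul_assoc, ← hab, t_mul_t_s]
  · rw [if_neg h, if_neg h, zero_mul, mul_zero]

lemma theta_ne_zero {a b v : Λ.Path} (hsa : Λ.s a = v) (hsb : Λ.s b = v)
    (hv : Λ.IsSource v) (hnz : f.t v ≠ 0) : f.t a * star (f.t b) ≠ 0 := by
  intro h0
  have hva : Λ.IsSource (Λ.s a) := hsa ▸ hv
  have hvb : Λ.IsSource (Λ.s b) := hsb ▸ hv
  have hA : star (f.t a) * f.t a = f.t v := by
    rw [star_mul_source f hva hva, if_pos rfl, hsa]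
  have hB : star (f.t b) * f.t b = f.t v := by
    rw [star_mul_source f hvb hvb, if_pos rfl, hsb]
  apply hnz
  calc f.t v = f.t v * f.t v := (f.idem v hv.1).symm
    _ = (star (f.t a) * f.t a) * (star (f.t b) * f.t b) := by rw [hA, hB]
    _ = star (f.t a) * ((f.t a * star (f.t b)) * f.t b) := by
        rw [mul_assoc, ← mul_assoc (f.t a)]
    _ = 0 := by rw [h0, zero_mul, mul_zero]

section Sum
variable {v : Λ.Path} {E : Set Λ.Path}

lemma sum_mul_tv (hv : Λ.IsVertex v) (hE : ∀ τ ∈ E, Λ.r τ = v) :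
    ∀ m : List Λ.Path, (∀ τ ∈ m, τ ∈ E) →
    ((m.map fun τ => f.t τ * star (f.t τ)).sum) * f.t v =
      (m.map fun τ => f.t τ * star (f.t τ)).sum := by
  intro m
  induction m with
  | nil => intro _; simp
  | cons b l ih =>
    intro hm
    have hb : Λ.r b = v := hE b (hm b List.mem_cons_self)
    have hbt : star (f.t b) * f.t v = star (f.t b) := by
      have : f.t v * f.t b = f.t b := t_v_mul f hv hb
      calc star (f.t b) * f.t v = star (star (f.t v) * f.t b) := by
            rw [star_mul, star_star]
        _ = star (f.t b) := by rw [f.selfadjoint v hv, this]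
    simp only [List.map_cons, List.sum_cons, add_mul]
    rw [ih (fun τ hτ => hm τ (List.mem_cons_of_mem b hτ)), mul_assoc, hbt]

lemma sum_mul_pb (hsrc : ∀ τ ∈ E, Λ.IsSource (Λ.s τ)) {b : Λ.Path} (hbE : b ∈ E) :
    ∀ m : List Λ.Path, (∀ τ ∈ m, τ ∈ E) → b ∉ m →
    ((m.map fun τ => f.t τ * star (f.t τ)).sum) * (f.t b * star (f.t b)) = 0 := by
  intro m
  induction m with
  | nil => intro _ _; simp
  | cons c l ih =>
    intro hm hbm
    have hc : c ∈ E := hm c List.mem_cons_self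
    have hne : c ≠ b := fun h => hbm (h ▸ List.mem_cons_self)
    simp only [List.map_cons, List.sum_cons, add_mul]
    rw [ih (fun τ hτ => hm τ (List.mem_cons_of_mem c hτ)) (fun h => hbm (List.mem_cons_of_mem c h)),
      theta_mul f rfl (hsrc c hc) (hsrc b hbE), if_neg hne, add_zero]

lemma foldl_aux (hv : Λ.IsVertex v) (hE : ∀ τ ∈ E, Λ.r τ = v ∧ Λ.IsSource (Λ.s τ)) :
    ∀ (l m : List Λ.Path), (m ++ l).Nodup → (∀ τ ∈ m ++ l, τ ∈ E) →
    (l.map fun τ => f.t v - f.t τ * star (f.t τ)).foldl (· * ·)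
      (f.t v - (m.map fun τ => f.t τ * star (f.t τ)).sum) =
    f.t v - ((m ++ l).map fun τ => f.t τ * star (f.t τ)).sum := by
  intro l
  induction l with
  | nil => intro m _ _; simp
  | cons b l ih =>
    intro m hnd hmem
    have hbE : b ∈ E := hmem b (by simp)
    have hbm : b ∉ m := by
      have := hnd
      rw [List.nodup_append] at this
      exact fun h => (this.2.2 b h b List.mem_cons_self) rfl
    have hstep : (f.t v - (m.map fun τ => f.t τ * star (f.t τ)).sum) *
        (f.t v - f.t b * star (f.t b)) =
        f.t v - ((m ++ [b]).map fun τ => f.t τ * star (f.t τ)).sum := by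
      rw [sub_mul, mul_sub, mul_sub]
      rw [f.idem v hv]
      have h1 : f.t v * (f.t b * star (f.t b)) = f.t b * star (f.t b) := by
        rw [← mul_assoc, t_v_mul f hv (hE b hbE).1]
      rw [h1, sum_mul_tv f hv (fun τ hτ => (hE τ hτ).1) m
        (fun τ hτ => hmem τ (List.mem_append_left _ hτ)),
        sum_mul_pb f (fun τ hτ => (hE τ hτ).2) hbE m
        (fun τ hτ => hmem τ (List.mem_append_left _ hτ)) hbm]
      simp only [List.map_append, List.sum_append, List.map_cons, List.sum_cons,
        List.map_nil, List.sum_nil, add_zero, sub_zero]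
      abel
    simp only [List.map_cons, List.foldl_cons]
    rw [hstep]
    have heq : (m ++ [b]) ++ l = m ++ b :: l := by simp
    have := ih (m ++ [b]) (by rw [heq]; exact hnd) (fun τ hτ => hmem τ (by rw [← heq]; exact hτ))
    rw [this, heq]

end Sum

lemma vertex_sum [Fintype Λ.Path] [DecidableEq Λ.Path] {v : Λ.Path} (hv : Λ.IsVertex v) :
    f.t v = ∑ τ ∈ (Set.toFinite {τ : Λ.Path | Λ.r τ = v ∧ Λ.IsSource (Λ.s τ)}).toFinset,
      f.t τ * star (f.t τ) := by
  set E : Set Λ.Path := {τ : Λ.Path | Λ.r τ = v ∧ Λ.IsSource (Λ.s τ)} with hEdef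
  set F := (Set.toFinite E).toFinset with hF
  have hmemF : ∀ τ, τ ∈ F ↔ (Λ.r τ = v ∧ Λ.IsSource (Λ.s τ)) := by
    intro τ; rw [hF, Set.Finite.mem_toFinset]; rfl
  have hEprop : ∀ τ ∈ E, Λ.r τ = v ∧ Λ.IsSource (Λ.s τ) := fun τ hτ => hτ
  -- F is nonempty
  obtain ⟨τ0, hτ0r, hτ0s⟩ := Λ.reach v hv
  have hFne : F.toList ≠ [] := by
    intro hnil
    have : τ0 ∈ F := (hmemF τ0).mpr ⟨hτ0r, hτ0s⟩
    rw [← Finset.mem_toList, hnil] at this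
    simp at this
  obtain ⟨a, l, hal⟩ : ∃ a l, F.toList = a :: l := by
    cases h : F.toList with
    | nil => exact absurd h hFne
    | cons a l => exact ⟨a, l, rfl⟩
  have hnodup : (a :: l).Nodup := hal ▸ F.nodup_toList
  have hmem : ∀ lam ∈ a :: l, Λ.r lam = v := by
    intro lam hlam
    have : lam ∈ F := by rw [← Finset.mem_toList, hal]; exact hlam
    exact ((hmemF lam).mp this).1
  have hmemE : ∀ τ ∈ [] ++ a :: l, τ ∈ E := by
    intro τ hτ
    simp only [List.nil_append] at hτ
    have : τ ∈ F := by rw [← Finset.mem_toList, hal]; exact hτ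
    rw [hF, Set.Finite.mem_toFinset] at this
    exact this
  have hexh : Λ.Exhaustive v {lam | lam ∈ a :: l} := by
    intro lam hlam
    obtain ⟨τ', hτ'r, hτ's⟩ := Λ.reach (Λ.s lam) (Λ.d_s lam)
    set mu := Λ.comp lam τ' with hmu
    have hsrm : Λ.s lam = Λ.r τ' := hτ'r.symm
    have hmuE : mu ∈ F := by
      rw [hmemF]
      constructor
      · rw [hmu, Λ.r_comp lam τ' hsrm, hlam]
      · rw [hmu, Λ.s_comp lam τ' hsrm]; exact hτ's
    refine ⟨mu, ?_, ⟨mu, ?_, ⟨τ', hsrm, rfl⟩, ⟨Λ.s mu, (Λ.r_s mu).symm, Λ.comp_id mu⟩⟩⟩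
    · show mu ∈ {lam | lam ∈ a :: l}
      rw [Set.mem_setOf_eq, ← hal, Finset.mem_toList]
      exact hmuE
    · -- d mu = d lam ⊔ d mu
      have hle : Λ.d lam ≤ Λ.d mu := by
        intro i
        rw [hmu, Λ.d_comp lam τ' hsrm]
        simp only [Pi.add_apply]
        omega
      exact (sup_eq_right.mpr hle).symm
  have h0 := f.ck4 v hv a l hnodup hmem hexh
  have h1 := foldl_aux f hv hEprop l [a]
    (by simpa using hnodup) (by simpa using hmemE)
  rw [show (f.t v - (([a].map fun τ => f.t τ * star (f.t τ))).sum) =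
    f.t v - f.t a * star (f.t a) by simp] at h1
  rw [h0] at h1
  have h2 : f.t v = ((a :: l).map fun τ => f.t τ * star (f.t τ)).sum := by
    have := h1.symm
    rw [show ([a] ++ l) = a :: l by simp] at this
    rw [← sub_eq_zero]
    exact this.symm ▸ (by rw [← this]) 
  rw [h2, ← Finset.sum_map_toList, hal]

lemma t_eq_sum [Fintype Λ.Path] [DecidableEq Λ.Path] (mu : Λ.Path) :
    f.t mu = ∑ τ ∈ (Set.toFinite {τ : Λ.Path | Λ.r τ = Λ.s mu ∧ Λ.IsSource (Λ.s τ)}).toFinset,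
      f.t (Λ.comp mu τ) * star (f.t τ) := by
  conv_lhs => rw [← t_mul_t_s f mu, vertex_sum f (Λ.d_s mu)]
  rw [Finset.mul_sum]
  refine Finset.sum_congr rfl ?_
  intro τ hτ
  rw [Set.Finite.mem_toFinset] at hτ
  rw [← mul_assoc, f.mul_eq mu τ hτ.1.symm]

end CKFamily

/-- Theorem 5.2(2). If `Λ` is a row-finite finitely aligned `k`-graph with
finitely many vertices and no cycles, then each `Λv` (`v` a source) is finite and the
C*-subalgebra generated by a Cuntz–Krieger family with nonzero source projections is
*-isomorphic to `⊕_{v} M_{Λv}(ℂ)` via `θ_{α,β} ↦ t_α t_β*`. -/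
theorem stmt2 {k : ℕ} (Λ : KGraph k) [DecidableEq Λ.Path]
    (hFA : Λ.FinitelyAligned) (hRF : Λ.RowFinite)
    (hfin : {v : Λ.Path | Λ.IsVertex v}.Finite) (hnc : Λ.NoCycles)
    (B : Type*) [NonUnitalCStarAlgebra B] (f : CKFamily Λ B)
    (hnz : ∀ v, Λ.IsSource v → f.t v ≠ 0) :
    (∀ v, Λ.IsSource v → {lam : Λ.Path | Λ.s lam = v}.Finite) ∧
    ∀ inst : (v : {v : Λ.Path // Λ.IsSource v}) → Fintype {lam : Λ.Path // Λ.s lam = v.1},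
      ∃ Φ : ((v : {v : Λ.Path // Λ.IsSource v}) →
          Matrix {lam : Λ.Path // Λ.s lam = v.1} {lam : Λ.Path // Λ.s lam = v.1} ℂ)
          →⋆ₙₐ[ℂ] B,
        Function.Injective Φ ∧
        Set.range Φ =
          ((NonUnitalStarAlgebra.adjoin ℂ (Set.range f.t)).topologicalClosure : Set B) ∧
        ∀ (v : {v : Λ.Path // Λ.IsSource v}) (α β : {lam : Λ.Path // Λ.s lam = v.1}),
          Φ (Pi.single v (Matrix.single α β 1)) = f.t α.1 * star (f.t β.1) := by

  haveI hfinP : Finite Λ.Path := Λ.path_finite hnc hRF hfin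
  haveI : Fintype Λ.Path := Fintype.ofFinite _
  refine ⟨fun v _ => Set.toFinite _, ?_⟩
  intro inst
  haveI : Fintype {v : Λ.Path // Λ.IsSource v} := Fintype.ofFinite _
  letI : ∀ v : {v : Λ.Path // Λ.IsSource v}, Fintype {lam : Λ.Path // Λ.s lam = v.1} := inst
  set T : Λ.Path → Λ.Path → B := fun a b => f.t a * star (f.t b) with hT
  set Φ0 : ((v : {v : Λ.Path // Λ.IsSource v}) →
      Matrix {lam : Λ.Path // Λ.s lam = v.1} {lam : Λ.Path // Λ.s lam = v.1} ℂ) → B :=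
    fun x => ∑ v : {v : Λ.Path // Λ.IsSource v}, ∑ α : {lam : Λ.Path // Λ.s lam = v.1},
      ∑ β : {lam : Λ.Path // Λ.s lam = v.1}, x v α β • T α.1 β.1 with hΦ0
  have hTmul : ∀ (v w : {v : Λ.Path // Λ.IsSource v}) (α β : {lam : Λ.Path // Λ.s lam = v.1})
      (γ δ : {lam : Λ.Path // Λ.s lam = w.1}),
      T α.1 β.1 * T γ.1 δ.1 = if β.1 = γ.1 then T α.1 δ.1 else 0 := by
    intro v w α β γ δ
    simp only [hT]
    exact f.theta_mul (α.2.trans β.2.symm) (by rw [β.2]; exact v.2) (by rw [γ.2]; exact w.2)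
  have hTs : ∀ a b, star (T a b) = T b a := by
    intro a b; simp only [hT]; rw [star_mul, star_star]
  have hadd : ∀ x y, Φ0 (x + y) = Φ0 x + Φ0 y := by
    intro x y
    simp only [hΦ0, Pi.add_apply, Matrix.add_apply, add_smul, Finset.sum_add_distrib]
  have hsmul : ∀ (c : ℂ) (x), Φ0 (c • x) = c • Φ0 x := by
    intro c x
    simp only [hΦ0, Pi.smul_apply, Matrix.smul_apply, smul_eq_mul, mul_smul, Finset.smul_sum]
  have hzero : Φ0 0 = 0 := by
    simp [hΦ0]
  have hsingle : ∀ (v : {v : Λ.Path // Λ.IsSource v}) (α β : {lam : Λ.Path // Λ.s lam = v.1}),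
      Φ0 (Pi.single v (Matrix.single α β 1)) = T α.1 β.1 := by
    intro v α β
    simp only [hΦ0]
    rw [Finset.sum_eq_single v]
    · rw [Pi.single_eq_same]
      rw [Finset.sum_eq_single α]
      · rw [Finset.sum_eq_single β]
        · rw [Matrix.single_apply_same, one_smul]
        · intro b _ hb
          rw [Matrix.single_apply_of_ne, zero_smul]
          exact fun h => hb h.2.symm
        · intro h; exact absurd (Finset.mem_univ _) h
      · intro a _ ha
        apply Finset.sum_eq_zero
        intro b _
        rw [Matrix.single_apply_of_ne, zero_smul]
        exact fun h => ha h.1.symm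
      · intro h; exact absurd (Finset.mem_univ _) h
    · intro w _ hw
      apply Finset.sum_eq_zero
      intro a _
      apply Finset.sum_eq_zero
      intro b _
      rw [Pi.single_eq_of_ne hw]
      simp
    · intro h; exact absurd (Finset.mem_univ _) h
  have hstar : ∀ x, Φ0 (star x) = star (Φ0 x) := by
    intro x
    have h1 : star (Φ0 x) = ∑ v : {v : Λ.Path // Λ.IsSource v},
        ∑ α : {lam : Λ.Path // Λ.s lam = v.1}, ∑ β : {lam : Λ.Path // Λ.s lam = v.1},
        star (x v α β) • T β.1 α.1 := by
      simp only [hΦ0, star_sum, star_smul, hTs]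
    rw [h1]
    simp only [hΦ0]
    have h2 : ∀ (v : {v : Λ.Path // Λ.IsSource v}) (α β : {lam : Λ.Path // Λ.s lam = v.1}),
        (star x) v α β = star (x v β α) := by
      intro v α β
      rfl
    simp only [h2]
    exact Finset.sum_congr rfl fun v _ => Finset.sum_comm
  have hmulsingle : ∀ (v w : {v : Λ.Path // Λ.IsSource v})
      (α β : {lam : Λ.Path // Λ.s lam = v.1}) (γ δ : {lam : Λ.Path // Λ.s lam = w.1}),
      Φ0 (Pi.single v (Matrix.single α β 1) * Pi.single w (Matrix.single γ δ 1)) =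
      Φ0 (Pi.single v (Matrix.single α β 1)) *
        Φ0 (Pi.single w (Matrix.single γ δ 1)) := by
    intro v w α β γ δ
    rw [hsingle, hsingle, hTmul v w α β γ δ]
    by_cases hvw : v = w
    · subst hvw
      rw [← Pi.single_mul]
      by_cases hbg : β = γ
      · subst hbg
        rw [Matrix.single_mul_single_same, one_mul, hsingle, if_pos rfl]
      · rw [Matrix.single_mul_single_of_ne (h := hbg), Pi.single_zero, hzero,
          if_neg (fun h => hbg (Subtype.ext h))]
    · have hprod : (Pi.single v (Matrix.single α β 1) *
          Pi.single w (Matrix.single γ δ 1) :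
          (u : {v : Λ.Path // Λ.IsSource v}) →
            Matrix {lam : Λ.Path // Λ.s lam = u.1} {lam : Λ.Path // Λ.s lam = u.1} ℂ) = 0 := by
        funext u
        rw [Pi.mul_apply]
        by_cases hu : u = v
        · subst hu
          rw [Pi.single_eq_of_ne hvw, mul_zero, Pi.zero_apply]
        · rw [Pi.single_eq_of_ne hu, zero_mul, Pi.zero_apply]
      rw [hprod, hzero, if_neg]
      intro h
      exact hvw (Subtype.ext (by rw [← β.2, h, γ.2]))
  let ΦL : ((v : {v : Λ.Path // Λ.IsSource v}) →
      Matrix {lam : Λ.Path // Λ.s lam = v.1} {lam : Λ.Path // Λ.s lam = v.1} ℂ) →ₗ[ℂ] B :=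
    { toFun := Φ0, map_add' := hadd, map_smul' := hsmul }
  have hmul : ∀ x y, Φ0 (x * y) = Φ0 x * Φ0 y := by
    have H1 : ∀ x x' y, Φ0 ((x + x') * y) = Φ0 (x * y) + Φ0 (x' * y) := by
      intro x x' y; rw [add_mul, hadd]
    have H2 : ∀ (c : ℂ) x y, Φ0 ((c • x) * y) = c • Φ0 (x * y) := by
      intro c x y; rw [smul_mul_assoc, hsmul]
    have H3 : ∀ x y y', Φ0 (x * (y + y')) = Φ0 (x * y) + Φ0 (x * y') := by
      intro x y y'; rw [mul_add, hadd]
    have H4 : ∀ (c : ℂ) x y, Φ0 (x * (c • y)) = c • Φ0 (x * y) := by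
      intro c x y; rw [mul_smul_comm, hsmul]
    have G1 : ∀ x x' y, Φ0 (x + x') * Φ0 y = Φ0 x * Φ0 y + Φ0 x' * Φ0 y := by
      intro x x' y; rw [hadd, add_mul]
    have G2 : ∀ (c : ℂ) x y, Φ0 (c • x) * Φ0 y = c • (Φ0 x * Φ0 y) := by
      intro c x y; rw [hsmul, smul_mul_assoc]
    have G3 : ∀ x y y', Φ0 x * Φ0 (y + y') = Φ0 x * Φ0 y + Φ0 x * Φ0 y' := by
      intro x y y'; rw [hadd, mul_add]
    have G4 : ∀ (c : ℂ) x y, Φ0 x * Φ0 (c • y) = c • (Φ0 x * Φ0 y) := by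
      intro c x y; rw [hsmul, mul_smul_comm]
    have hM : LinearMap.mk₂ ℂ (fun x y => Φ0 (x * y)) H1 H2 H3 H4 =
        LinearMap.mk₂ ℂ (fun x y => Φ0 x * Φ0 y) G1 G2 G3 G4 := by
      refine Module.Basis.ext (Pi.basis (fun v : {v : Λ.Path // Λ.IsSource v} =>
        Matrix.stdBasis ℂ {lam : Λ.Path // Λ.s lam = v.1} {lam : Λ.Path // Λ.s lam = v.1})) ?_
      rintro ⟨v, α, β⟩
      refine Module.Basis.ext (Pi.basis (fun v : {v : Λ.Path // Λ.IsSource v} =>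
        Matrix.stdBasis ℂ {lam : Λ.Path // Λ.s lam = v.1} {lam : Λ.Path // Λ.s lam = v.1})) ?_
      rintro ⟨w, γ, δ⟩
      simp only [LinearMap.mk₂_apply, Pi.basis_apply, Matrix.stdBasis_eq_single]
      exact hmulsingle v w α β γ δ
    intro x y
    simpa using LinearMap.congr_fun (LinearMap.congr_fun hM x) y
  let PHI : ((v : {v : Λ.Path // Λ.IsSource v}) →
      Matrix {lam : Λ.Path // Λ.s lam = v.1} {lam : Λ.Path // Λ.s lam = v.1} ℂ) →⋆ₙₐ[ℂ] B :=
    { toFun := Φ0, map_smul' := hsmul, map_zero' := hzero, map_add' := hadd,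
      map_mul' := hmul, map_star' := hstar }
  have hcoe : ∀ x, PHI x = Φ0 x := fun _ => rfl
  have hker : ∀ x, Φ0 x = 0 → x = 0 := by
    intro x hx
    funext v
    refine Matrix.ext fun α β => ?_
    have htriple : ∀ (w : {v : Λ.Path // Λ.IsSource v}) (γ δ : {lam : Λ.Path // Λ.s lam = w.1}),
        T α.1 α.1 * T γ.1 δ.1 * T β.1 β.1 =
          if γ.1 = α.1 ∧ δ.1 = β.1 then T α.1 β.1 else 0 := by
      intro w γ δ
      rw [hTmul v w α α γ δ]
      by_cases h1 : α.1 = γ.1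
      · rw [if_pos h1]
        have hvw : v = w := Subtype.ext (by rw [← α.2, h1, γ.2])
        subst hvw
        rw [hTmul v v α δ β β]
        by_cases h2 : δ.1 = β.1
        · rw [if_pos h2, if_pos ⟨h1.symm, h2⟩]
        · rw [if_neg h2, if_neg (fun hc => h2 hc.2)]
      · rw [if_neg h1, zero_mul, if_neg (fun hc => h1 hc.1.symm)]
    have hxv : T α.1 α.1 * Φ0 x * T β.1 β.1 = x v α β • T α.1 β.1 := by
      simp only [hΦ0, Finset.mul_sum, Finset.sum_mul, mul_smul_comm, smul_mul_assoc, htriple]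
      rw [Finset.sum_eq_single v]
      · rw [Finset.sum_eq_single α]
        · rw [Finset.sum_eq_single β]
          · rw [if_pos ⟨rfl, rfl⟩]
          · intro b _ hb
            rw [if_neg, smul_zero]
            rintro ⟨-, h2⟩
            exact hb (Subtype.ext h2)
          · intro h; exact absurd (Finset.mem_univ _) h
        · intro a _ ha
          apply Finset.sum_eq_zero
          intro b _
          rw [if_neg, smul_zero]
          rintro ⟨h1, -⟩
          exact ha (Subtype.ext h1)
        · intro h; exact absurd (Finset.mem_univ _) h
      · intro w _ hw
        apply Finset.sum_eq_zero
        intro a _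
        apply Finset.sum_eq_zero
        intro b _
        rw [if_neg, smul_zero]
        rintro ⟨h1, -⟩
        exact hw (Subtype.ext (by rw [← a.2, h1, α.2]))
      · intro h; exact absurd (Finset.mem_univ _) h
    rw [hx, mul_zero, zero_mul] at hxv
    have hTne : T α.1 β.1 ≠ 0 := by
      simp only [hT]
      exact f.theta_ne_zero α.2 β.2 v.2 (hnz v.1 v.2)
    have hc : x v α β = 0 := by
      by_contra hcne
      apply hTne
      calc T α.1 β.1 = (x v α β)⁻¹ • (x v α β • T α.1 β.1) := by
            rw [smul_smul, inv_mul_cancel₀ hcne, one_smul]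
        _ = 0 := by rw [← hxv, smul_zero]
    simpa using hc
  have hTrange : ∀ mu : Λ.Path, ∃ x, Φ0 x = f.t mu := by
    intro mu
    have hmem : ∀ τ ∈ (Set.toFinite {τ : Λ.Path | Λ.r τ = Λ.s mu ∧ Λ.IsSource (Λ.s τ)}).toFinset,
        Λ.r τ = Λ.s mu ∧ Λ.IsSource (Λ.s τ) := by
      intro τ hτ
      rw [Set.Finite.mem_toFinset] at hτ
      exact hτ
    refine ⟨∑ τ ∈ (Set.toFinite {τ : Λ.Path | Λ.r τ = Λ.s mu ∧
        Λ.IsSource (Λ.s τ)}).toFinset.attach,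
      Pi.single (⟨Λ.s τ.1, (hmem τ.1 τ.2).2⟩ : {v : Λ.Path // Λ.IsSource v})
        (Matrix.single ⟨Λ.comp mu τ.1, Λ.s_comp mu τ.1 (hmem τ.1 τ.2).1.symm⟩
          ⟨τ.1, rfl⟩ 1), ?_⟩
    rw [show Φ0 = ⇑ΦL from rfl, map_sum]
    have hterm : ∀ τ ∈ (Set.toFinite {τ : Λ.Path | Λ.r τ = Λ.s mu ∧
        Λ.IsSource (Λ.s τ)}).toFinset.attach,
        ΦL (Pi.single (⟨Λ.s τ.1, (hmem τ.1 τ.2).2⟩ : {v : Λ.Path // Λ.IsSource v})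
          (Matrix.single ⟨Λ.comp mu τ.1, Λ.s_comp mu τ.1 (hmem τ.1 τ.2).1.symm⟩
            ⟨τ.1, rfl⟩ 1)) = T (Λ.comp mu τ.1) τ.1 := by
      intro τ _
      exact hsingle _ _ _
    rw [Finset.sum_congr rfl hterm]
    rw [Finset.sum_attach _ (fun τ => T (Λ.comp mu τ) τ)]
    rw [f.t_eq_sum mu]
  refine ⟨PHI, ?_, ?_, ?_⟩
  · intro x y hxy
    have h1 : Φ0 (x - y) = 0 := by
      rw [show Φ0 = ⇑ΦL from rfl, map_sub]
      rw [show ΦL x = Φ0 x from rfl, show ΦL y = Φ0 y from rfl]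
      rw [show Φ0 x = PHI x from rfl, show Φ0 y = PHI y from rfl, hxy, sub_self]
    exact sub_eq_zero.mp (hker _ h1)
  · haveI : FiniteDimensional ℂ ((v : {v : Λ.Path // Λ.IsSource v}) →
        Matrix {lam : Λ.Path // Λ.s lam = v.1} {lam : Λ.Path // Λ.s lam = v.1} ℂ) :=
      inferInstance
    have hclosed : IsClosed (Set.range Φ0) := by
      have hre : Set.range Φ0 = (LinearMap.range ΦL : Set B) := (LinearMap.coe_range ΦL).symm
      rw [hre]
      exact Submodule.closed_of_finiteDimensional _
    have hsub1 : Set.range (⇑PHI) ⊆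
        ((NonUnitalStarAlgebra.adjoin ℂ (Set.range f.t)).topologicalClosure : Set B) := by
      rintro _ ⟨x, rfl⟩
      have hcl : (((NonUnitalStarAlgebra.adjoin ℂ (Set.range f.t)).topologicalClosure : Set B)) =
          closure ((NonUnitalStarAlgebra.adjoin ℂ (Set.range f.t) : Set B)) := rfl
      rw [hcl]
      apply subset_closure
      rw [SetLike.mem_coe]
      show Φ0 x ∈ NonUnitalStarAlgebra.adjoin ℂ (Set.range f.t)
      simp only [hΦ0]
      refine sum_mem ?_
      intro v _
      refine sum_mem ?_
      intro α _
      refine sum_mem ?_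
      intro β _
      refine SMulMemClass.smul_mem _ ?_
      simp only [hT]
      exact mul_mem (NonUnitalStarAlgebra.subset_adjoin ℂ _ (Set.mem_range_self _))
        (star_mem (NonUnitalStarAlgebra.subset_adjoin ℂ _ (Set.mem_range_self _)))
    have hsub2 : ((NonUnitalStarAlgebra.adjoin ℂ (Set.range f.t)).topologicalClosure : Set B) ⊆
        Set.range (⇑PHI) := by
      have hle : NonUnitalStarAlgebra.adjoin ℂ (Set.range f.t) ≤
          NonUnitalStarAlgHom.range PHI := by
        apply NonUnitalStarAlgebra.adjoin_le
        rintro _ ⟨mu, rfl⟩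
        obtain ⟨x, hx⟩ := hTrange mu
        exact ⟨x, hx⟩
      have hcl : (((NonUnitalStarAlgebra.adjoin ℂ (Set.range f.t)).topologicalClosure : Set B)) =
          closure ((NonUnitalStarAlgebra.adjoin ℂ (Set.range f.t) : Set B)) := rfl
      rw [hcl]
      apply closure_minimal _ hclosed
      intro b hb
      exact (NonUnitalStarAlgHom.mem_range PHI).mp (hle hb)
    exact le_antisymm hsub1 hsub2
  · intro v α β
    rw [hcoe, hsingle]
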